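/- Let F be a symmetric fourth-order tensor on ℝⁿ with score function S⁴(x) = Σ_{i,j,k,l=1}^n F_{ijkl} x_i x_j x_k x_l, and let ‖F‖₂ = sqrt(Σ_{i,j,k,l=1}^n (F_{ijkl})²). Then for any α ≥ 3‖F‖₂, the function S⁴_α(x) := S⁴(x) + α‖x‖₂⁴ is convex on ℝⁿ. -/

import Mathlib

/-- A fourth-order tensor is symmetric if its entries are invariant under any
permutation of the indices. -/
def Sym4 {n : ℕ} (F : Fin n → Fin n → Fin n → Fin n → ℝ) : Prop :=
  ∀ (σ : Equiv.Perm (Fin 4)) (v : Fin 4 → Fin n),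
    F (v (σ 0)) (v (σ 1)) (v (σ 2)) (v (σ 3)) = F (v 0) (v 1) (v 2) (v 3)

/-- The multilinear form associated to a fourth-order tensor. -/
def mform4 {n : ℕ} (F : Fin n → Fin n → Fin n → Fin n → ℝ)
    (x y z t : EuclideanSpace ℝ (Fin n)) : ℝ :=
  ∑ i, ∑ j, ∑ k, ∑ l, F i j k l * x i * y j * z k * t l

/-- The Frobenius norm `‖F‖₂` of a fourth-order tensor. -/
noncomputable def frobNorm4 {n : ℕ} (F : Fin n → Fin n → Fin n → Fin n → ℝ) : ℝ :=
  Real.sqrt (∑ i, ∑ j, ∑ k, ∑ l, (F i j k l) ^ 2)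

open Finset
variable {n : ℕ} {F : Fin n → Fin n → Fin n → Fin n → ℝ}

lemma mf_swap01 (hF : Sym4 F) (x y z w : EuclideanSpace ℝ (Fin n)) :
    mform4 F x y z w = mform4 F y x z w := by
  unfold mform4
  rw [Finset.sum_comm]
  refine Finset.sum_congr rfl fun j _ => Finset.sum_congr rfl fun i _ =>
    Finset.sum_congr rfl fun k _ => Finset.sum_congr rfl fun l _ => ?_
  have h := hF (Equiv.swap 0 1) ![i, j, k, l]
  rw [show ((Equiv.swap 0 1 : Equiv.Perm (Fin 4)) 0) = 1 from by decide,
      show ((Equiv.swap 0 1 : Equiv.Perm (Fin 4)) 1) = 0 from by decide,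
      show ((Equiv.swap 0 1 : Equiv.Perm (Fin 4)) 2) = 2 from by decide,
      show ((Equiv.swap 0 1 : Equiv.Perm (Fin 4)) 3) = 3 from by decide] at h
  simp only [Matrix.cons_val_zero, Matrix.cons_val_one, Matrix.head_cons,
    Matrix.cons_val_two, Matrix.tail_cons, Matrix.cons_val_three] at h
  rw [← h]; ring

lemma mf_swap12 (hF : Sym4 F) (x y z w : EuclideanSpace ℝ (Fin n)) :
    mform4 F x y z w = mform4 F x z y w := by
  unfold mform4
  refine Finset.sum_congr rfl fun i _ => ?_
  rw [Finset.sum_comm]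
  refine Finset.sum_congr rfl fun k _ => Finset.sum_congr rfl fun j _ =>
    Finset.sum_congr rfl fun l _ => ?_
  have h := hF (Equiv.swap 1 2) ![i, j, k, l]
  rw [show ((Equiv.swap 1 2 : Equiv.Perm (Fin 4)) 0) = 0 from by decide,
      show ((Equiv.swap 1 2 : Equiv.Perm (Fin 4)) 1) = 2 from by decide,
      show ((Equiv.swap 1 2 : Equiv.Perm (Fin 4)) 2) = 1 from by decide,
      show ((Equiv.swap 1 2 : Equiv.Perm (Fin 4)) 3) = 3 from by decide] at h
  simp only [Matrix.cons_val_zero, Matrix.cons_val_one, Matrix.head_cons,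
    Matrix.cons_val_two, Matrix.tail_cons, Matrix.cons_val_three] at h
  rw [← h]; ring

lemma mf_swap23 (hF : Sym4 F) (x y z w : EuclideanSpace ℝ (Fin n)) :
    mform4 F x y z w = mform4 F x y w z := by
  unfold mform4
  refine Finset.sum_congr rfl fun i _ => Finset.sum_congr rfl fun j _ => ?_
  rw [Finset.sum_comm]
  refine Finset.sum_congr rfl fun l _ => Finset.sum_congr rfl fun k _ => ?_
  have h := hF (Equiv.swap 2 3) ![i, j, k, l]
  rw [show ((Equiv.swap 2 3 : Equiv.Perm (Fin 4)) 0) = 0 from by decide,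
      show ((Equiv.swap 2 3 : Equiv.Perm (Fin 4)) 1) = 1 from by decide,
      show ((Equiv.swap 2 3 : Equiv.Perm (Fin 4)) 2) = 3 from by decide,
      show ((Equiv.swap 2 3 : Equiv.Perm (Fin 4)) 3) = 2 from by decide] at h
  simp only [Matrix.cons_val_zero, Matrix.cons_val_one, Matrix.head_cons,
    Matrix.cons_val_two, Matrix.tail_cons, Matrix.cons_val_three] at h
  rw [← h]; ring

lemma mf_add1 (x x' y z w : EuclideanSpace ℝ (Fin n)) :
    mform4 F (x + x') y z w = mform4 F x y z w + mform4 F x' y z w := by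
  unfold mform4
  rw [← Finset.sum_add_distrib]
  refine Finset.sum_congr rfl fun i _ => ?_
  rw [← Finset.sum_add_distrib]
  refine Finset.sum_congr rfl fun j _ => ?_
  rw [← Finset.sum_add_distrib]
  refine Finset.sum_congr rfl fun k _ => ?_
  rw [← Finset.sum_add_distrib]
  refine Finset.sum_congr rfl fun l _ => ?_
  simp [PiLp.add_apply]
  ring

lemma mf_smul1 (c : ℝ) (x y z w : EuclideanSpace ℝ (Fin n)) :
    mform4 F (c • x) y z w = c * mform4 F x y z w := by
  unfold mform4
  rw [Finset.mul_sum]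
  refine Finset.sum_congr rfl fun i _ => ?_
  rw [Finset.mul_sum]
  refine Finset.sum_congr rfl fun j _ => ?_
  rw [Finset.mul_sum]
  refine Finset.sum_congr rfl fun k _ => ?_
  rw [Finset.mul_sum]
  refine Finset.sum_congr rfl fun l _ => ?_
  simp [PiLp.smul_apply]
  ring

lemma mf_expand (hF : Sym4 F) (x v : EuclideanSpace ℝ (Fin n)) (t : ℝ) :
    mform4 F (x + t•v) (x + t•v) (x + t•v) (x + t•v)
      = mform4 F x x x x + 4*t*mform4 F x x x v + 6*t^2*mform4 F x x v v
        + 4*t^3*mform4 F x v v v + t^4*mform4 F v v v v := by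
  have E1 : ∀ a b c : EuclideanSpace ℝ (Fin n),
      mform4 F (x + t•v) a b c = mform4 F x a b c + t * mform4 F v a b c :=
    fun a b c => by rw [mf_add1, mf_smul1]
  have E2 : ∀ a b c : EuclideanSpace ℝ (Fin n),
      mform4 F a (x + t•v) b c = mform4 F a x b c + t * mform4 F a v b c := by
    intro a b c
    rw [mf_swap01 hF a _ b c, E1, mf_swap01 hF x a b c, mf_swap01 hF v a b c]
  have E3 : ∀ a b c : EuclideanSpace ℝ (Fin n),
      mform4 F a b (x + t•v) c = mform4 F a b x c + t * mform4 F a b v c := by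
    intro a b c
    rw [mf_swap12 hF a b _ c, E2, mf_swap12 hF a x b c, mf_swap12 hF a v b c]
  have E4 : ∀ a b c : EuclideanSpace ℝ (Fin n),
      mform4 F a b c (x + t•v) = mform4 F a b c x + t * mform4 F a b c v := by
    intro a b c
    rw [mf_swap23 hF a b c _, E3, mf_swap23 hF a b x c, mf_swap23 hF a b v c]
  have C1 : mform4 F v x x x = mform4 F x x x v := by
    rw [mf_swap01 hF, mf_swap12 hF, mf_swap23 hF]
  have C2 : mform4 F x v x x = mform4 F x x x v := by
    rw [mf_swap12 hF, mf_swap23 hF]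
  have C3 : mform4 F x x v x = mform4 F x x x v := by
    rw [mf_swap23 hF]
  have C4 : mform4 F v v x x = mform4 F x x v v := by
    rw [mf_swap12 hF, mf_swap01 hF, mf_swap23 hF, mf_swap12 hF]
  have C5 : mform4 F v x v x = mform4 F x x v v := by
    rw [mf_swap01 hF, mf_swap23 hF, mf_swap12 hF]
  have C6 : mform4 F v x x v = mform4 F x x v v := by
    rw [mf_swap01 hF, mf_swap12 hF]
  have C7 : mform4 F x v v x = mform4 F x x v v := by
    rw [mf_swap23 hF, mf_swap12 hF]
  have C8 : mform4 F x v x v = mform4 F x x v v := by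
    rw [mf_swap12 hF]
  have C9 : mform4 F v v v x = mform4 F x v v v := by
    rw [mf_swap23 hF, mf_swap12 hF, mf_swap01 hF]
  have C10 : mform4 F v v x v = mform4 F x v v v := by
    rw [mf_swap12 hF, mf_swap01 hF]
  have C11 : mform4 F v x v v = mform4 F x v v v := by
    rw [mf_swap01 hF]
  simp only [E1, E2, E3, E4, mul_add, add_mul]
  simp only [C1, C2, C3, C4, C5, C6, C7, C8, C9, C10, C11]
  ring

lemma mf_expand2 (hF : Sym4 F) (x v : EuclideanSpace ℝ (Fin n)) (s : ℝ) :
    mform4 F (x + s•v) (x + s•v) v v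
      = mform4 F x x v v + 2*s*mform4 F x v v v + s^2*mform4 F v v v v := by
  have E1 : ∀ a b c : EuclideanSpace ℝ (Fin n),
      mform4 F (x + s•v) a b c = mform4 F x a b c + s * mform4 F v a b c :=
    fun a b c => by rw [mf_add1, mf_smul1]
  have E2 : ∀ a b c : EuclideanSpace ℝ (Fin n),
      mform4 F a (x + s•v) b c = mform4 F a x b c + s * mform4 F a v b c := by
    intro a b c
    rw [mf_swap01 hF a _ b c, E1, mf_swap01 hF x a b c, mf_swap01 hF v a b c]
  rw [E1, E2, E2, mf_swap01 hF v x v v]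
  ring

lemma sq_expand (x v : EuclideanSpace ℝ (Fin n)) (s : ℝ) :
    ∑ i, ((x + s•v) i)^2
      = (∑ i, (x i)^2) + 2*s*(∑ i, x i * v i) + s^2 * (∑ i, (v i)^2) := by
  simp only [PiLp.add_apply, PiLp.smul_apply, smul_eq_mul]
  have h : ∀ i, (x i + s*v i)^2 = x i^2 + 2*s*(x i*v i) + s^2*v i^2 := fun i => by ring
  simp only [h]
  rw [Finset.sum_add_distrib, Finset.sum_add_distrib, ← Finset.mul_sum, ← Finset.mul_sum]

lemma norm_sq_eq (x : EuclideanSpace ℝ (Fin n)) : ‖x‖^2 = ∑ i, (x i)^2 := by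
  rw [EuclideanSpace.norm_eq, Real.sq_sqrt (by positivity)]
  simp [Real.norm_eq_abs, sq_abs]

lemma mf_cs (z v : EuclideanSpace ℝ (Fin n)) :
    (mform4 F z z v v)^2
      ≤ (∑ i, ∑ j, ∑ k, ∑ l, (F i j k l)^2)
        * ((∑ i, (z i)^2) * (∑ i, (z i)^2) * (∑ i, (v i)^2) * (∑ i, (v i)^2)) := by
  have h1 : mform4 F z z v v = ∑ p : Fin n × Fin n × Fin n × Fin n,
      (F p.1 p.2.1 p.2.2.1 p.2.2.2) * (z p.1 * z p.2.1 * v p.2.2.1 * v p.2.2.2) := by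
    unfold mform4
    simp only [Fintype.sum_prod_type]
    exact Finset.sum_congr rfl fun i _ => Finset.sum_congr rfl fun j _ =>
      Finset.sum_congr rfl fun k _ => Finset.sum_congr rfl fun l _ => by ring
  have h2 : (∑ i, ∑ j, ∑ k, ∑ l, (F i j k l)^2)
      = ∑ p : Fin n × Fin n × Fin n × Fin n, (F p.1 p.2.1 p.2.2.1 p.2.2.2)^2 := by
    simp only [Fintype.sum_prod_type]
  have h3 : ∑ p : Fin n × Fin n × Fin n × Fin n,
      (z p.1 * z p.2.1 * v p.2.2.1 * v p.2.2.2)^2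
      = (∑ i, (z i)^2) * (∑ i, (z i)^2) * (∑ i, (v i)^2) * (∑ i, (v i)^2) := by
    simp only [Fintype.sum_prod_type, mul_pow, ← Finset.sum_mul, ← Finset.mul_sum]
  rw [h1, h2, ← h3]
  exact Finset.sum_mul_sq_le_sq_mul_sq _ _ _

lemma quartic_convex (d0 d1 d2 d3 d4 : ℝ)
    (h : ∀ t : ℝ, 0 ≤ 2*d2 + 6*d3*t + 12*d4*t^2) :
    ConvexOn ℝ Set.univ (fun s : ℝ => d0 + d1*s + d2*s^2 + d3*s^3 + d4*s^4) := by
  have h1 : ∀ s : ℝ, HasDerivAt (fun s : ℝ => d0 + d1*s + d2*s^2 + d3*s^3 + d4*s^4)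
      (d1 + 2*d2*s + 3*d3*s^2 + 4*d4*s^3) s := by
    intro s
    have := ((((hasDerivAt_const s d0).add ((hasDerivAt_id s).const_mul d1)).add
      ((hasDerivAt_pow 2 s).const_mul d2)).add
      ((hasDerivAt_pow 3 s).const_mul d3)).add
      ((hasDerivAt_pow 4 s).const_mul d4)
    refine this.congr_deriv ?_
    push_cast
    ring
  have h2 : ∀ s : ℝ, HasDerivAt (fun s : ℝ => d1 + 2*d2*s + 3*d3*s^2 + 4*d4*s^3)
      (2*d2 + 6*d3*s + 12*d4*s^2) s := by
    intro s
    have := (((hasDerivAt_const s d1).add ((hasDerivAt_id s).const_mul (2*d2))).add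
      ((hasDerivAt_pow 2 s).const_mul (3*d3))).add
      ((hasDerivAt_pow 3 s).const_mul (4*d4))
    refine this.congr_deriv ?_
    push_cast
    ring
  have hderiv : deriv (fun s : ℝ => d0 + d1*s + d2*s^2 + d3*s^3 + d4*s^4)
      = fun s => d1 + 2*d2*s + 3*d3*s^2 + 4*d4*s^3 := funext fun s => (h1 s).deriv
  apply convexOn_univ_of_deriv2_nonneg (fun s => (h1 s).differentiableAt)
  · rw [hderiv]; exact fun s => (h2 s).differentiableAt
  · intro t
    simp only [Function.iterate_succ, Function.iterate_zero, Function.comp_apply, id_eq, hderiv]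
    rw [(h2 t).deriv]
    exact h t

set_option maxHeartbeats 1000000 in
/-- For `α ≥ 3‖F‖₂`, the function `S⁴_α(x) = S⁴(x) + α ‖x‖₂⁴` is convex on `ℝⁿ`. -/
theorem stmt_10 {n : ℕ} (F : Fin n → Fin n → Fin n → Fin n → ℝ) (hF : Sym4 F)
    (α : ℝ) (hα : 3 * frobNorm4 F ≤ α) :
    ConvexOn ℝ Set.univ
      (fun x : EuclideanSpace ℝ (Fin n) => mform4 F x x x x + α * ‖x‖ ^ 4) := by
  have hN0 : 0 ≤ frobNorm4 F := Real.sqrt_nonneg _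
  have hα0 : 0 ≤ α := le_trans (by positivity) hα
  constructor
  · exact convex_univ
  intro x _ y _ a b ha hb hab
  set v : EuclideanSpace ℝ (Fin n) := y - x with hv
  set A := ∑ i, (x i)^2 with hA
  set B := ∑ i, x i * v i with hB
  set C := ∑ i, (v i)^2 with hC
  set M4 := mform4 F x x x x with hM4
  set M3 := mform4 F x x x v with hM3
  set M2 := mform4 F x x v v with hM2
  set M1 := mform4 F x v v v with hM1
  set M0 := mform4 F v v v v with hM0
  have hA0 : 0 ≤ A := Finset.sum_nonneg fun i _ => sq_nonneg _
  have hC0 : 0 ≤ C := Finset.sum_nonneg fun i _ => sq_nonneg _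
  set q : ℝ → ℝ := fun s => (M4 + α*A^2) + (4*M3 + 4*α*A*B)*s
      + (6*M2 + α*(2*A*C + 4*B^2))*s^2 + (4*M1 + 4*α*B*C)*s^3 + (M0 + α*C^2)*s^4 with hq
  have hkey : ∀ s : ℝ,
      mform4 F (x+s•v) (x+s•v) (x+s•v) (x+s•v) + α*‖x+s•v‖^4 = q s := by
    intro s
    have hn : ‖x+s•v‖^2 = A + 2*s*B + s^2*C := by
      rw [norm_sq_eq]; exact sq_expand x v s
    have hn4 : ‖x+s•v‖^4 = (A + 2*s*B + s^2*C)^2 := by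
      rw [show ‖x+s•v‖^4 = (‖x+s•v‖^2)^2 by ring, hn]
    rw [mf_expand hF x v s, hn4, hq]
    simp only [hM4, hM3, hM2, hM1, hM0]
    ring
  have hconv : ConvexOn ℝ Set.univ q := by
    rw [hq]
    apply quartic_convex
    intro s
    have hz : ∑ i, ((x+s•v) i)^2 = A + 2*s*B + s^2*C := sq_expand x v s
    have hZ0 : 0 ≤ A + 2*s*B + s^2*C := hz ▸ Finset.sum_nonneg fun i _ => sq_nonneg _
    have hMz : mform4 F (x+s•v) (x+s•v) v v = M2 + 2*s*M1 + s^2*M0 := mf_expand2 hF x v s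
    have hcs := mf_cs (F := F) (x+s•v) v
    have hNsq : frobNorm4 F ^ 2 = ∑ i, ∑ j, ∑ k, ∑ l, (F i j k l)^2 := by
      rw [frobNorm4]
      exact Real.sq_sqrt (Finset.sum_nonneg fun i _ => Finset.sum_nonneg fun j _ =>
        Finset.sum_nonneg fun k _ => Finset.sum_nonneg fun l _ => sq_nonneg _)
    rw [hMz, hz, ← hC, ← hNsq] at hcs
    have hP2 : (M2 + 2*s*M1 + s^2*M0)^2
        ≤ (frobNorm4 F * ((A + 2*s*B + s^2*C) * C))^2 := by
      calc (M2 + 2*s*M1 + s^2*M0)^2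
          ≤ frobNorm4 F ^ 2
            * ((A + 2*s*B + s^2*C) * (A + 2*s*B + s^2*C) * C * C) := hcs
        _ = (frobNorm4 F * ((A + 2*s*B + s^2*C) * C))^2 := by ring
    have hK0 : 0 ≤ frobNorm4 F * ((A + 2*s*B + s^2*C) * C) := by positivity
    have hPlow : -(frobNorm4 F * ((A + 2*s*B + s^2*C) * C)) ≤ M2 + 2*s*M1 + s^2*M0 := by
      nlinarith [hP2, hK0]
    nlinarith [hPlow, mul_nonneg (sub_nonneg.2 hα) (mul_nonneg hC0 hZ0),
      mul_nonneg hα0 (sq_nonneg (B + C*s)), mul_nonneg (mul_nonneg hN0 hZ0) hC0]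
  have hxy : a • x + b • y = x + b • v := by
    rw [hv, smul_sub]
    have ha' : a = 1 - b := by linarith
    rw [ha', sub_smul, one_smul]
    abel
  have h0 : q 0 = mform4 F x x x x + α*‖x‖^4 := by
    rw [← hkey 0]; simp
  have h1 : q 1 = mform4 F y y y y + α*‖y‖^4 := by
    rw [← hkey 1]
    have : x + (1:ℝ) • v = y := by rw [one_smul, hv]; abel
    rw [this]
  have hb' := hconv.2 (Set.mem_univ (0:ℝ)) (Set.mem_univ (1:ℝ)) ha hb hab
  simp only [smul_eq_mul, mul_zero, mul_one, add_zero, zero_add] at hb'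
  simp only [smul_eq_mul]
  calc mform4 F (a•x+b•y) (a•x+b•y) (a•x+b•y) (a•x+b•y) + α*‖a•x+b•y‖^4
      = q b := by rw [hxy]; exact hkey b
    _ ≤ a * q 0 + b * q 1 := hb'
    _ = a * (mform4 F x x x x + α*‖x‖^4) + b * (mform4 F y y y y + α*‖y‖^4) := by
        rw [h0, h1]
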